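/- Let n ≥ 1, let A_1, …, A_p and B_1, …, B_q be Hermitian U(1)-invariant complex matrices such that the ordered products of matrix exponentials agree: Matrix.exp(-i·A_1)·…·Matrix.exp(-i·A_p) = Matrix.exp(-i·B_1)·…·Matrix.exp(-i·B_q). Then for every function c : {0,…,n} → ℤ, setting C := Σ_{m=0}^{n} c(m)·Π_m, the real traces satisfy Σ_{j=1}^{p} Tr(A_j·C) ≡ Σ_{j=1}^{q} Tr(B_j·C) (mod 2π). -/

import Mathlib

open Finset Matrix

noncomputable section

/-- Hamming weight of a basis label. -/
def hw {n : ℕ} (z : Fin n → Bool) : ℕ := (Finset.univ.filter fun i => z i = true).card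

/-- A matrix is U(1)-invariant if it vanishes off the Hamming-weight blocks. -/
def U1Invariant {n : ℕ} (M : Matrix (Fin n → Bool) (Fin n → Bool) ℂ) : Prop :=
  ∀ z z', hw z ≠ hw z' → M z z' = 0

/-- The projector `Π_m` onto the Hamming-weight-`m` sector. -/
def Pimat (n m : ℕ) : Matrix (Fin n → Bool) (Fin n → Bool) ℂ :=
  Matrix.diagonal fun z => if hw z = m then 1 else 0

/-- `x ≡ y (mod 2π)`. -/
def Mod2Pi (x y : ℝ) : Prop := ∃ j : ℤ, x - y = 2 * Real.pi * j

-- ### auxiliary material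

lemma hw_le {n : ℕ} (z : Fin n → Bool) : hw z ≤ n := by
  classical
  have := Finset.card_filter_le Finset.univ fun i => z i = true
  simpa [hw] using this

/-- The weight-block decomposition of the basis labels. -/
def wEquiv (n : ℕ) : (Fin n → Bool) ≃ Σ m : Fin (n+1), {z : Fin n → Bool // hw z = m.val} where
  toFun z := ⟨⟨hw z, Nat.lt_succ_of_le (hw_le z)⟩, ⟨z, rfl⟩⟩
  invFun x := x.2.val
  left_inv z := rfl
  right_inv := by
    rintro ⟨⟨m, hm⟩, z, h⟩
    dsimp at h ⊢
    subst h
    rfl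

/-- The `m`-th diagonal block of a matrix. -/
def blk {n : ℕ} (M : Matrix (Fin n → Bool) (Fin n → Bool) ℂ) (m : Fin (n+1)) :
    Matrix {z : Fin n → Bool // hw z = m.val} {z : Fin n → Bool // hw z = m.val} ℂ :=
  M.submatrix Subtype.val Subtype.val

lemma blk_smul {n : ℕ} (a : ℂ) (M : Matrix (Fin n → Bool) (Fin n → Bool) ℂ) (m : Fin (n+1)) :
    blk (a • M) m = a • blk M m := rfl

lemma blk_isHermitian {n : ℕ} {M : Matrix (Fin n → Bool) (Fin n → Bool) ℂ}
    (hM : M.IsHermitian) (m : Fin (n+1)) : (blk M m).IsHermitian := by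
  ext a b
  simpa [blk, Matrix.conjTranspose_apply] using congrFun (congrFun hM a.val) b.val

lemma reindex_eq_blockDiagonal' {n : ℕ} {M : Matrix (Fin n → Bool) (Fin n → Bool) ℂ}
    (hM : U1Invariant M) :
    Matrix.reindex (wEquiv n) (wEquiv n) M = Matrix.blockDiagonal' (blk M) := by
  ext x y
  rcases x with ⟨m, a⟩
  rcases y with ⟨m', b⟩
  rcases eq_or_ne m m' with rfl | hne
  · simp [Matrix.blockDiagonal'_apply_eq, blk, wEquiv]
  · rw [Matrix.blockDiagonal'_apply_ne _ _ _ hne]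
    have : hw a.val ≠ hw b.val := by
      rw [a.2, b.2]
      exact fun h => hne (Fin.ext h)
    simpa [wEquiv] using hM _ _ this

section NormInst
attribute [local instance] Matrix.linftyOpNormedAddCommGroup Matrix.linftyOpNormedRing
  Matrix.linftyOpNormedAlgebra

lemma exp_reindex {n : ℕ} (M : Matrix (Fin n → Bool) (Fin n → Bool) ℂ) :
    Matrix.reindex (wEquiv n) (wEquiv n) (NormedSpace.exp M)
      = NormedSpace.exp (Matrix.reindex (wEquiv n) (wEquiv n) M) := by
  have hcont : Continuous
      fun X : Matrix (Fin n → Bool) (Fin n → Bool) ℂ =>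
        (Matrix.reindexAlgEquiv ℂ ℂ (wEquiv n)).toRingHom X := by
    exact continuous_matrix fun i j =>
      ((continuous_apply ((wEquiv n).symm j)).comp (continuous_apply ((wEquiv n).symm i)))
  exact NormedSpace.map_exp (Matrix.reindexAlgEquiv ℂ ℂ (wEquiv n)).toRingHom hcont M

lemma exp_blk_pi {n : ℕ} (M : Matrix (Fin n → Bool) (Fin n → Bool) ℂ) :
    NormedSpace.exp (blk ((-Complex.I) • M))
      = fun m => NormedSpace.exp ((-Complex.I) • blk M m) := by
  funext m
  exact Pi.coe_exp _ m
end NormInst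

/-- det of exp(-i H) for Hermitian H. -/
lemma det_exp_neg_I_smul {ι : Type*} [Fintype ι] [DecidableEq ι]
    {H : Matrix ι ι ℂ} (hH : H.IsHermitian) :
    (NormedSpace.exp ((-Complex.I) • H)).det = Complex.exp ((-Complex.I) * H.trace) := by
  classical
  set U : (Matrix ι ι ℂ)ˣ := Unitary.toUnits (Matrix.IsHermitian.eigenvectorUnitary hH) with hU
  have hUcoe : (U : Matrix ι ι ℂ) = (Matrix.IsHermitian.eigenvectorUnitary hH : Matrix ι ι ℂ) :=
    rfl
  have hUinv : ((U⁻¹ : (Matrix ι ι ℂ)ˣ) : Matrix ι ι ℂ)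
      = star (Matrix.IsHermitian.eigenvectorUnitary hH : Matrix ι ι ℂ) := rfl
  have hspec := hH.spectral_theorem
  rw [Unitary.conjStarAlgAut_apply] at hspec
  have hD : (-Complex.I) • Matrix.diagonal (RCLike.ofReal ∘ hH.eigenvalues)
      = Matrix.diagonal (fun i => -Complex.I * (hH.eigenvalues i : ℂ)) := by
    ext i j
    rcases eq_or_ne i j with rfl | h
    · simp [Matrix.smul_apply, Function.comp]
    · simp [Matrix.smul_apply, Matrix.diagonal_apply_ne _ h]
  have key : (-Complex.I) • H
      = (U : Matrix ι ι ℂ) * Matrix.diagonal (fun i => -Complex.I * (hH.eigenvalues i : ℂ))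
        * ((U⁻¹ : (Matrix ι ι ℂ)ˣ) : Matrix ι ι ℂ) := by
    conv_lhs => rw [hspec]
    rw [← hD, hUcoe, hUinv, mul_smul_comm, smul_mul_assoc]
  rw [key, Matrix.exp_units_conj, Matrix.det_units_conj, Matrix.exp_diagonal,
    Matrix.det_diagonal]
  have htr : H.trace = ∑ i, (hH.eigenvalues i : ℂ) := by
    conv_lhs => rw [hspec]
    rw [Matrix.trace_mul_cycle, ← hUinv, ← hUcoe, Units.inv_mul, one_mul, Matrix.trace_diagonal]
    simp [Function.comp]
  rw [htr, Finset.mul_sum, Complex.exp_sum]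
  refine Finset.prod_congr rfl fun i _ => ?_
  rw [Pi.coe_exp, Complex.exp_eq_exp_ℂ]

/-- diagonal entries of a Hermitian matrix are real. -/
lemma herm_diag_real {ι : Type*} [Fintype ι] {M : Matrix ι ι ℂ} (hM : M.IsHermitian) (i : ι) :
    ((M i i).re : ℂ) = M i i := by
  have := congrFun (congrFun hM i) i
  rw [Matrix.conjTranspose_apply] at this
  exact Complex.conj_eq_iff_re.mp this

/-- if two ordered products of exponentials of Hermitian U(1)-invariant
Hamiltonians agree, then the corresponding phases `∑_j Tr(A_j C)` agree mod 2π. -/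
theorem stmt13 (n : ℕ) (hn : 1 ≤ n) (p q : ℕ)
    (A : Fin p → Matrix (Fin n → Bool) (Fin n → Bool) ℂ)
    (B : Fin q → Matrix (Fin n → Bool) (Fin n → Bool) ℂ)
    (hAherm : ∀ j, (A j).IsHermitian) (hAU1 : ∀ j, U1Invariant (A j))
    (hBherm : ∀ j, (B j).IsHermitian) (hBU1 : ∀ j, U1Invariant (B j))
    (hprod : (List.ofFn fun j => NormedSpace.exp ((-Complex.I) • A j)).prod
           = (List.ofFn fun j => NormedSpace.exp ((-Complex.I) • B j)).prod)
    (c : ℕ → ℤ) :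
    Mod2Pi
      (∑ j, (Matrix.trace (A j * ∑ m ∈ Finset.range (n+1), (c m : ℂ) • Pimat n m)).re)
      (∑ j, (Matrix.trace (B j * ∑ m ∈ Finset.range (n+1), (c m : ℂ) • Pimat n m)).re) := by
  classical
  set σ := wEquiv n with hσ
  -- block-level equality of products of exponentials
  have hre : ∀ (M : Matrix (Fin n → Bool) (Fin n → Bool) ℂ), U1Invariant M →
      (Matrix.reindexAlgEquiv ℂ ℂ σ).toRingHom (NormedSpace.exp ((-Complex.I) • M))
        = Matrix.blockDiagonal' (fun m => NormedSpace.exp ((-Complex.I) • blk M m)) := by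
    intro M hU1
    have hU1' : U1Invariant ((-Complex.I) • M) := fun z z' h => by
      simp [Matrix.smul_apply, hU1 z z' h]
    show Matrix.reindex σ σ (NormedSpace.exp ((-Complex.I) • M)) = _
    rw [hσ, exp_reindex, reindex_eq_blockDiagonal' hU1', Matrix.exp_blockDiagonal',
      exp_blk_pi]
  have hblock : ∀ m : Fin (n+1),
      (List.ofFn fun j => NormedSpace.exp ((-Complex.I) • blk (A j) m)).prod
      = (List.ofFn fun j => NormedSpace.exp ((-Complex.I) • blk (B j) m)).prod := by
    have h2 := congrArg (Matrix.reindexAlgEquiv ℂ ℂ σ).toRingHom hprod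
    rw [map_list_prod, map_list_prod, List.map_ofFn, List.map_ofFn] at h2
    have hA' : (((Matrix.reindexAlgEquiv ℂ ℂ σ).toRingHom : _ → _) ∘
          fun j => NormedSpace.exp ((-Complex.I) • A j))
        = (Matrix.blockDiagonal' ∘
            fun j m => NormedSpace.exp ((-Complex.I) • blk (A j) m)) := by
      funext j; exact hre _ (hAU1 j)
    have hB' : (((Matrix.reindexAlgEquiv ℂ ℂ σ).toRingHom : _ → _) ∘
          fun j => NormedSpace.exp ((-Complex.I) • B j))
        = (Matrix.blockDiagonal' ∘
            fun j m => NormedSpace.exp ((-Complex.I) • blk (B j) m)) := by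
      funext j; exact hre _ (hBU1 j)
    rw [hA', hB', ← List.map_ofFn, ← List.map_ofFn] at h2
    rw [show (Matrix.blockDiagonal' :
          (∀ m : Fin (n+1), Matrix {z : Fin n → Bool // hw z = m.val}
            {z : Fin n → Bool // hw z = m.val} ℂ) → _)
        = ⇑(Matrix.blockDiagonal'RingHom _ ℂ) from rfl,
      ← map_list_prod, ← map_list_prod] at h2
    simp only [Matrix.blockDiagonal'RingHom_apply] at h2
    have h4 := Matrix.blockDiagonal'_injective h2
    intro m
    have h5 := congrFun h4 m
    rw [Pi.list_prod_apply, Pi.list_prod_apply, List.map_ofFn, List.map_ofFn] at h5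
    exact h5
  -- per-block phases
  set rA : Fin (n+1) → ℝ := fun m => ∑ j, ((blk (A j) m).trace).re with hrA
  set rB : Fin (n+1) → ℝ := fun m => ∑ j, ((blk (B j) m).trace).re with hrB
  have htrA : ∀ j m, (((blk (A j) m).trace).re : ℂ) = (blk (A j) m).trace := by
    intro j m
    have hh := blk_isHermitian (hAherm j) m
    simp only [Matrix.trace, Matrix.diag, Complex.re_sum]
    push_cast
    exact Finset.sum_congr rfl fun i _ => herm_diag_real hh i
  have htrB : ∀ j m, (((blk (B j) m).trace).re : ℂ) = (blk (B j) m).trace := by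
    intro j m
    have hh := blk_isHermitian (hBherm j) m
    simp only [Matrix.trace, Matrix.diag, Complex.re_sum]
    push_cast
    exact Finset.sum_congr rfl fun i _ => herm_diag_real hh i
  have hphase : ∀ m : Fin (n+1), ∃ k : ℤ, rA m - rB m = 2 * Real.pi * k := by
    intro m
    have hdet := congrArg Matrix.det (hblock m)
    rw [← Matrix.coe_detMonoidHom, map_list_prod, map_list_prod, List.map_ofFn,
      List.map_ofFn] at hdet
    simp only [Matrix.coe_detMonoidHom, Function.comp_def] at hdet
    have hdA : (List.ofFn fun j => ((NormedSpace.exp ((-Complex.I) • blk (A j) m)).det)).prod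
        = Complex.exp ((-Complex.I) * ((rA m : ℝ) : ℂ)) := by
      rw [List.prod_ofFn]
      have : ((rA m : ℝ) : ℂ) = ∑ j, (blk (A j) m).trace := by
        rw [hrA]; push_cast
        exact Finset.sum_congr rfl fun j _ => htrA j m
      rw [this, Finset.mul_sum, Complex.exp_sum]
      exact Finset.prod_congr rfl fun j _ => det_exp_neg_I_smul (blk_isHermitian (hAherm j) m)
    have hdB : (List.ofFn fun j => ((NormedSpace.exp ((-Complex.I) • blk (B j) m)).det)).prod
        = Complex.exp ((-Complex.I) * ((rB m : ℝ) : ℂ)) := by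
      rw [List.prod_ofFn]
      have : ((rB m : ℝ) : ℂ) = ∑ j, (blk (B j) m).trace := by
        rw [hrB]; push_cast
        exact Finset.sum_congr rfl fun j _ => htrB j m
      rw [this, Finset.mul_sum, Complex.exp_sum]
      exact Finset.prod_congr rfl fun j _ => det_exp_neg_I_smul (blk_isHermitian (hBherm j) m)
    rw [hdA, hdB, Complex.exp_eq_exp_iff_exists_int] at hdet
    obtain ⟨k, hk⟩ := hdet
    refine ⟨-k, ?_⟩
    have h2 : ((rA m - rB m : ℝ) : ℂ) = ((2 * Real.pi * ((-k : ℤ) : ℝ) : ℝ) : ℂ) := by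
      push_cast at hk ⊢
      linear_combination Complex.I * hk +
        (((rA m : ℂ)) - (rB m : ℂ) + 2 * (Real.pi : ℂ) * (k : ℂ)) * Complex.I_sq
    exact_mod_cast h2
  choose k hk using hphase
  -- express traces against C in terms of block traces
  have hC : ∀ (M : Matrix (Fin n → Bool) (Fin n → Bool) ℂ),
      (Matrix.trace (M * ∑ m ∈ Finset.range (n+1), (c m : ℂ) • Pimat n m)).re
        = ∑ m : Fin (n+1), (c m.val : ℝ) * ((blk M m).trace).re := by
    intro M
    rw [Matrix.mul_sum, Matrix.trace_sum]
    have step : ∀ m : ℕ, Matrix.trace (M * ((c m : ℂ) • Pimat n m))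
        = (c m : ℂ) * ∑ z ∈ Finset.univ.filter (fun z => hw z = m), M z z := by
      intro m
      rw [mul_smul_comm, Matrix.trace_smul, smul_eq_mul]
      congr 1
      rw [Matrix.trace]
      simp only [Matrix.diag, Pimat, Matrix.mul_diagonal]
      rw [Finset.sum_filter]
      exact Finset.sum_congr rfl fun z _ => by by_cases h : hw z = m <;> simp [h]
    have hblktr : ∀ m : Fin (n+1),
        (blk M m).trace = ∑ z ∈ Finset.univ.filter (fun z => hw z = m.val), M z z := by
      intro m
      rw [Matrix.trace]
      simp only [Matrix.diag, blk, Matrix.submatrix_apply]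
      exact (Finset.sum_subtype (s := Finset.univ.filter (fun z => hw z = m.val))
        (p := fun z => hw z = m.val) (by intro x; simp) (fun z => M z z)).symm
    calc (∑ m ∈ Finset.range (n+1), Matrix.trace (M * ((c m : ℂ) • Pimat n m))).re
        = ∑ m ∈ Finset.range (n+1),
            ((c m : ℂ) * ∑ z ∈ Finset.univ.filter (fun z => hw z = m), M z z).re := by
          rw [Complex.re_sum]
          exact Finset.sum_congr rfl fun m _ => by rw [step m]
      _ = ∑ m : Fin (n+1),
            ((c m.val : ℂ) * ∑ z ∈ Finset.univ.filter (fun z => hw z = m.val), M z z).re := by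
          rw [← Fin.sum_univ_eq_sum_range]
      _ = ∑ m : Fin (n+1), (c m.val : ℝ) * ((blk M m).trace).re := by
          refine Finset.sum_congr rfl fun m _ => ?_
          rw [hblktr m]
          rw [show ((c m.val : ℂ)) = (((c m.val : ℝ)) : ℂ) by push_cast; ring,
            Complex.re_ofReal_mul]
  -- final assembly
  refine ⟨∑ m : Fin (n+1), c m.val * k m, ?_⟩
  have hLHS : (∑ j, (Matrix.trace (A j * ∑ m ∈ Finset.range (n+1), (c m : ℂ) • Pimat n m)).re)
      = ∑ m : Fin (n+1), (c m.val : ℝ) * rA m := by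
    calc (∑ j, (Matrix.trace (A j * ∑ m ∈ Finset.range (n+1), (c m : ℂ) • Pimat n m)).re)
        = ∑ j, ∑ m : Fin (n+1), (c m.val : ℝ) * ((blk (A j) m).trace).re :=
          Finset.sum_congr rfl fun j _ => hC (A j)
      _ = ∑ m : Fin (n+1), ∑ j, (c m.val : ℝ) * ((blk (A j) m).trace).re := Finset.sum_comm
      _ = ∑ m : Fin (n+1), (c m.val : ℝ) * rA m := by
          refine Finset.sum_congr rfl fun m _ => ?_
          rw [hrA, Finset.mul_sum]
  have hRHS : (∑ j, (Matrix.trace (B j * ∑ m ∈ Finset.range (n+1), (c m : ℂ) • Pimat n m)).re)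
      = ∑ m : Fin (n+1), (c m.val : ℝ) * rB m := by
    calc (∑ j, (Matrix.trace (B j * ∑ m ∈ Finset.range (n+1), (c m : ℂ) • Pimat n m)).re)
        = ∑ j, ∑ m : Fin (n+1), (c m.val : ℝ) * ((blk (B j) m).trace).re :=
          Finset.sum_congr rfl fun j _ => hC (B j)
      _ = ∑ m : Fin (n+1), ∑ j, (c m.val : ℝ) * ((blk (B j) m).trace).re := Finset.sum_comm
      _ = ∑ m : Fin (n+1), (c m.val : ℝ) * rB m := by
          refine Finset.sum_congr rfl fun m _ => ?_
          rw [hrB, Finset.mul_sum]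
  rw [hLHS, hRHS, ← Finset.sum_sub_distrib]
  have : ∀ m : Fin (n+1), (c m.val : ℝ) * rA m - (c m.val : ℝ) * rB m
      = 2 * Real.pi * ((c m.val * k m : ℤ) : ℝ) := by
    intro m
    rw [← mul_sub, hk m]
    push_cast
    ring
  rw [Finset.sum_congr rfl fun m _ => this m, ← Finset.mul_sum]
  push_cast
  ring
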